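/- arXiv:2406.06429 — 6 statements merged into one kernel-verified Lean document; each statement's English description precedes it below -/
import Mathlib

section
/- Let f be a partially-bent Boolean function on n variables and let k = dim V(f). Then: (i) if f is balanced, Σ_{a ∈ 𝔽₂ⁿ, a ≠ 0} wt(D_a f) = 2^{2n-1}; (ii) if f is unbalanced, Σ_{a ∈ 𝔽₂ⁿ, a ≠ 0} wt(D_a f) = 2^{2n-1} − 2^{n+k-1}. -/
/-- The vector space 𝔽₂ⁿ. -/
abbrev BV (n : ℕ) := Fin n → ZMod 2

/-- First-order derivative of a Boolean function: `D_a f (x) = f (x + a) + f x`. -/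
def bderiv {n : ℕ} (f : BV n → ZMod 2) (a : BV n) : BV n → ZMod 2 :=
  fun x => f (x + a) + f x

/-- Weight of a Boolean function: the number of inputs mapped to 1. -/
noncomputable def bwt {n : ℕ} (f : BV n → ZMod 2) : ℕ := {x | f x = 1}.ncard

/-- `𝔉(f) = Σ_x (-1)^(f x)`. -/
def fou {n : ℕ} (f : BV n → ZMod 2) : ℤ := ∑ x : BV n, (-1 : ℤ) ^ (f x).val

/-- Component function `F_λ(x) = λ · F(x)` (dot product over 𝔽₂). -/
def cmpnt {n m : ℕ} (F : BV n → BV m) (l : BV m) : BV n → ZMod 2 :=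
  fun x => ∑ i, l i * F x i

/-- A Boolean function on n variables is balanced if its weight is `2^(n-1)`. -/
def IsBalanced {n : ℕ} (f : BV n → ZMod 2) : Prop := bwt f = 2 ^ (n - 1)

open Finset

lemma bwt_eq_card {n : ℕ} (g : BV n → ZMod 2) :
    bwt g = (univ.filter (fun x => g x = 1)).card := by
  rw [bwt, show {x | g x = 1} = ↑(univ.filter (fun x => g x = 1)) from by ext x; simp,
    Set.ncard_coe_finset]

lemma sign_eq (v : ZMod 2) : (-1:ℤ)^(v.val) = 1 - 2 * (if v = 1 then 1 else 0) := by revert v; decide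

lemma sign_add (u v : ZMod 2) : (-1:ℤ)^((u+v).val) = (-1)^(u.val) * (-1)^(v.val) := by revert u v; decide

lemma card_BV (n : ℕ) : Fintype.card (BV n) = 2 ^ n := by simp

lemma fou_eq {n : ℕ} (g : BV n → ZMod 2) :
    fou g = 2^n - 2 * (bwt g : ℤ) := by
  rw [fou, bwt_eq_card, Finset.sum_congr rfl (fun x _ => sign_eq (g x)),
    Finset.sum_sub_distrib, ← Finset.mul_sum, Finset.sum_boole, Finset.sum_const,
    Finset.card_univ, card_BV]
  push_cast
  ring

lemma fou_conv {n : ℕ} (f : BV n → ZMod 2) :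
    ∑ a : BV n, fou (bderiv f a) = (fou f)^2 := by
  have h1 : ∀ x : BV n, ∑ a : BV n, (-1:ℤ)^((f (x+a)).val)
      = ∑ y : BV n, (-1:ℤ)^((f y).val) :=
    fun x => Fintype.sum_equiv (Equiv.addLeft x) _ _ (fun a => rfl)
  calc ∑ a : BV n, fou (bderiv f a)
      = ∑ a : BV n, ∑ x : BV n, (-1:ℤ)^((f (x+a)).val) * (-1:ℤ)^((f x).val) := by
        simp only [fou, bderiv, sign_add]
    _ = ∑ x : BV n, ∑ a : BV n, (-1:ℤ)^((f (x+a)).val) * (-1:ℤ)^((f x).val) :=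
        Finset.sum_comm
    _ = ∑ x : BV n, (∑ y : BV n, (-1:ℤ)^((f y).val)) * (-1:ℤ)^((f x).val) := by
        refine Finset.sum_congr rfl fun x _ => ?_
        rw [← Finset.sum_mul, h1 x]
    _ = (fou f)^2 := by rw [← Finset.mul_sum, sq]; rfl

lemma bderiv_add_lin {n : ℕ} (f : BV n → ZMod 2) (a b : BV n)
    (h : ∀ x, bderiv f a x = bderiv f a 0) :
    bderiv f (a+b) 0 = bderiv f a 0 + bderiv f b 0 := by
  have hb := h b
  clear h
  simp only [bderiv, zero_add] at *
  rw [add_comm a b]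
  generalize f (b + a) = u at *
  generalize f b = v at *
  generalize f a = w at *
  generalize f 0 = z at *
  revert hb
  revert u v w z
  decide

/-- For a partially-bent Boolean function f (every derivative is constant or balanced),
    with k = dim V(f) where V(f) is the space of linear structures:
    (i) if f is balanced, Σ_{a ≠ 0} wt(D_a f) = 2^(2n-1);
    (ii) if f is unbalanced, Σ_{a ≠ 0} wt(D_a f) = 2^(2n-1) − 2^(n+k-1). -/
theorem sum_weight_partially_bent_derivatives (n : ℕ) (hn : 1 ≤ n) (f : BV n → ZMod 2)
    (hpb : ∀ a : BV n, (∃ c, ∀ x, bderiv f a x = c) ∨ IsBalanced (bderiv f a))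
    (V : Submodule (ZMod 2) (BV n))
    (hV : (V : Set (BV n)) = {a : BV n | ∃ c, ∀ x, bderiv f a x = c})
    (k : ℕ) (hk : Module.finrank (ZMod 2) V = k) :
    (IsBalanced f →
      (∑ a ∈ Finset.univ.filter (fun a : BV n => a ≠ 0), bwt (bderiv f a)) = 2 ^ (2 * n - 1))
    ∧ (¬ IsBalanced f →
      (∑ a ∈ Finset.univ.filter (fun a : BV n => a ≠ 0), bwt (bderiv f a))
          = 2 ^ (2 * n - 1) - 2 ^ (n + k - 1)) := by
  classical
  have hmem : ∀ a : BV n, a ∈ V ↔ ∃ c, ∀ x, bderiv f a x = c := by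
    intro a
    rw [← SetLike.mem_coe, hV]
    exact Iff.rfl
  have hconst : ∀ a ∈ V, ∀ x, bderiv f a x = bderiv f a 0 := by
    intro a ha x
    obtain ⟨c, hc⟩ := (hmem a).1 ha
    rw [hc x, hc 0]
  set S := ∑ a ∈ Finset.univ.filter (fun a : BV n => a ≠ 0), bwt (bderiv f a) with hS
  -- derivative at 0 is the zero function
  have hD0 : bwt (bderiv f 0) = 0 := by
    rw [bwt_eq_card]
    convert Finset.card_empty
    ext x
    simp only [Finset.mem_filter, Finset.mem_univ, true_and, Finset.notMem_empty, iff_false,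
      bderiv, add_zero]
    intro h
    have : f x + f x = 0 := by generalize f x = u; revert u; decide
    rw [this] at h
    exact one_ne_zero h.symm
  have hfilter : univ.filter (fun a : BV n => a ≠ 0) = univ.erase 0 := by
    ext a; simp
  have hsum_univ : ∑ a : BV n, (bwt (bderiv f a) : ℤ) = (S : ℤ) := by
    rw [← Finset.sum_erase_add univ _ (Finset.mem_univ (0 : BV n)), hD0, hS, hfilter]
    push_cast
    ring
  have hpow2n : (2:ℤ)^(2*n) = 2^n * 2^n := by rw [two_mul, pow_add]
  have key : 2 * (S:ℤ) = 2^(2*n) - (fou f)^2 := by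
    have h2 : ∑ a : BV n, fou (bderiv f a) = (fou f)^2 := fou_conv f
    have h3 : ∑ a : BV n, fou (bderiv f a)
        = ∑ a : BV n, ((2:ℤ)^n - 2 * (bwt (bderiv f a):ℤ)) :=
      Finset.sum_congr rfl (fun a _ => fou_eq _)
    rw [h3, Finset.sum_sub_distrib, ← Finset.mul_sum, hsum_univ, Finset.sum_const,
      card_univ, card_BV] at h2
    simp only [nsmul_eq_mul] at h2
    push_cast at h2
    rw [hpow2n]
    linarith
  -- decomposition of (fou f)^2 over V
  set Vf := univ.filter (fun a : BV n => a ∈ V) with hVf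
  set T := ∑ a ∈ Vf, (-1:ℤ)^((bderiv f a 0).val) with hT
  have h2n1 : (2:ℤ) * 2^(n-1) = 2^n := by
    rw [← pow_succ']
    congr 1
    omega
  have hVfou : (fou f)^2 = 2^n * T := by
    rw [← fou_conv f,
      ← Finset.sum_filter_add_sum_filter_not univ (fun a : BV n => a ∈ V)]
    have hz : ∑ a ∈ univ.filter (fun a : BV n => ¬ a ∈ V), fou (bderiv f a) = 0 := by
      refine Finset.sum_eq_zero fun a ha => ?_
      simp only [Finset.mem_filter] at ha
      rcases hpb a with hc | hb
      · exact absurd ((hmem a).2 hc) ha.2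
      · rw [fou_eq, hb]
        push_cast
        linarith
    rw [hz, add_zero, hT, Finset.mul_sum]
    refine Finset.sum_congr rfl fun a ha => ?_
    simp only [hVf, Finset.mem_filter] at ha
    rw [fou, Finset.sum_congr rfl (fun x _ => by rw [hconst a ha.2 x]),
      Finset.sum_const, card_univ, card_BV, nsmul_eq_mul]
    push_cast
    ring
  -- a₀ with nonzero constant kills T
  have hself : ∀ b : BV n, b + b = 0 := by
    intro b; funext i
    show b i + b i = 0
    generalize b i = u
    revert u; decide
  have hT0 : ∀ a₀ ∈ V, bderiv f a₀ 0 = 1 → T = 0 := by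
    intro a₀ ha₀ hc1
    have hTT : T = -T := by
      nth_rewrite 1 [hT]
      rw [show -T = ∑ a ∈ Vf, -((-1:ℤ)^((bderiv f a 0).val)) from by
        rw [hT, Finset.sum_neg_distrib]]
      refine Finset.sum_nbij' (fun a => a + a₀) (fun a => a + a₀) ?_ ?_ ?_ ?_ ?_
      · intro a ha
        simp only [hVf, Finset.mem_filter, Finset.mem_univ, true_and] at *
        exact V.add_mem ha ha₀
      · intro a ha
        simp only [hVf, Finset.mem_filter, Finset.mem_univ, true_and] at *
        exact V.add_mem ha ha₀
      · intro a _; show a + a₀ + a₀ = a; rw [add_assoc, hself, add_zero]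
      · intro a _; show a + a₀ + a₀ = a; rw [add_assoc, hself, add_zero]
      · intro a ha
        simp only [hVf, Finset.mem_filter, Finset.mem_univ, true_and] at ha
        rw [bderiv_add_lin f a a₀ (hconst a ha), hc1, sign_add]
        norm_num [ZMod.val_one]
    linarith
  -- case analyses
  constructor
  · intro hbal
    have hfou0 : fou f = 0 := by
      rw [fou_eq, hbal]
      push_cast
      linarith
    rw [hfou0] at key
    have h2' : (2:ℤ) * 2^(2*n-1) = 2^(2*n) := by
      rw [← pow_succ']
      congr 1
      omega
    have : 2 * (S:ℤ) = 2 * 2^(2*n-1) := by rw [key]; linarith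
    have hSZ : (S:ℤ) = 2^(2*n-1) := by linarith
    exact_mod_cast hSZ
  · intro hunbal
    have hfou_ne : fou f ≠ 0 := by
      intro h0
      apply hunbal
      have := fou_eq f
      rw [h0] at this
      have hbn : (bwt f : ℤ) = 2^(n-1) := by linarith
      exact_mod_cast hbn
    have hTne : T ≠ 0 := by
      intro h0
      rw [h0, mul_zero] at hVfou
      exact hfou_ne (pow_eq_zero_iff (by norm_num) |>.1 hVfou)
    have hall : ∀ a ∈ V, bderiv f a 0 = 0 := by
      intro a ha
      by_contra hne
      have h1 : bderiv f a 0 = 1 := by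
        generalize bderiv f a 0 = u at *
        revert hne; revert u; decide
      exact hTne (hT0 a ha h1)
    have hTval : T = 2^k := by
      have hone : ∀ a ∈ Vf, (-1:ℤ)^((bderiv f a 0).val) = 1 := by
        intro a ha
        simp only [hVf, Finset.mem_filter, Finset.mem_univ, true_and] at ha
        rw [hall a ha]
        simp [ZMod.val_zero]
      rw [hT, Finset.sum_congr rfl hone, Finset.sum_const, nsmul_eq_mul, mul_one]
      have hcard : Vf.card = Fintype.card V := (Fintype.card_subtype _).symm
      rw [hcard, Module.card_eq_pow_finrank (K := ZMod 2) (V := ↥V), ZMod.card, hk]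
      push_cast
      ring
    have hkn : k ≤ n := by
      rw [← hk]
      have := Submodule.finrank_le V
      rwa [Module.finrank_fintype_fun_eq_card, Fintype.card_fin] at this
    -- final arithmetic
    have hA : 2^(2*n) = 2 * 2^(2*n-1) := by
      rw [← pow_succ']
      congr 1
      omega
    have hB : 2^(n+k) = 2 * 2^(n+k-1) := by
      rw [← pow_succ']
      congr 1
      omega
    have hAB : (2:ℕ)^(n+k-1) ≤ 2^(2*n-1) := Nat.pow_le_pow_right (by norm_num) (by omega)
    have hZ : 2 * (S:ℤ) = 2^(2*n) - 2^(n+k) := by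
      rw [key, hVfou, hTval, ← pow_add]
    have hAz : (2:ℤ)^(2*n) = 2 * ((2^(2*n-1):ℕ):ℤ) := by exact_mod_cast hA
    have hBz : (2:ℤ)^(n+k) = 2 * ((2^(n+k-1):ℕ):ℤ) := by exact_mod_cast hB
    have hfin : 2*(S:ℤ) = 2 * ((2^(2*n-1):ℕ):ℤ) - 2*((2^(n+k-1):ℕ):ℤ) := by
      rw [hZ, hAz, hBz]
    omega
end

section
/- Let F : 𝔽₂ⁿ → 𝔽₂^m be a vectorial Boolean function. Then Σ_{λ ∈ 𝔽₂^m} Σ_{a ∈ 𝔽₂ⁿ} 𝔉(D_a F_λ) ≥ 2^{n+m}, and equality holds if and only if m ≥ n and F is an embedding (i.e., injective). -/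

lemma charSum {m : ℕ} (v : BV m) :
    ∑ l : BV m, (-1:ℤ)^((∑ i, l i * v i).val) = if v = 0 then (2:ℤ)^m else 0 := by
  by_cases hv : v = 0
  · subst hv
    simp [Fintype.card_fun]
  · simp only [if_neg hv]
    obtain ⟨j, hj⟩ : ∃ j, v j ≠ 0 := by
      by_contra h
      push_neg at h
      exact hv (funext fun i => h i)
    have hv1 : v j = 1 := by
      have : ∀ x : ZMod 2, x ≠ 0 → x = 1 := by decide
      exact this _ hj
    set e : BV m := Pi.single j (1 : ZMod 2) with he
    set f : BV m → ℤ := fun l => (-1:ℤ)^((∑ i, l i * v i).val) with hf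
    have key : ∀ l : BV m, f (l + e) = - f l := by
      intro l
      have hsum : ∑ i, (l + e) i * v i = (∑ i, l i * v i) + 1 := by
        simp only [Pi.add_apply, add_mul, Finset.sum_add_distrib]
        congr 1
        rw [Finset.sum_eq_single j]
        · simp [he, hv1]
        · intro b _ hb; simp [he, Pi.single_apply, hb]
        · simp
      have hflip : ∀ c : ZMod 2, (-1:ℤ)^((c+1).val) = -(-1:ℤ)^(c.val) := by
        decide
      simp only [hf, hsum, hflip]
    have h1 : ∑ l : BV m, f (l + e) = ∑ l : BV m, f l :=
      Equiv.sum_comp (Equiv.addRight e) f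
    have h2 : (∑ l : BV m, f l) = - ∑ l : BV m, f l := by
      calc ∑ l : BV m, f l = ∑ l : BV m, f (l + e) := h1.symm
        _ = ∑ l : BV m, (- f l) := by simp only [key]
        _ = - ∑ l : BV m, f l := by rw [Finset.sum_neg_distrib]
    linarith

/-- Σ_{λ ∈ 𝔽₂^m} Σ_{a ∈ 𝔽₂ⁿ} 𝔉(D_a F_λ) ≥ 2^(n+m),
    with equality iff m ≥ n and F is an embedding. -/
theorem fourier_derivatives_vectorial (n m : ℕ) (F : BV n → BV m) :
    (2 : ℤ) ^ (n + m) ≤ ∑ l : BV m, ∑ a : BV n, fou (bderiv (cmpnt F l) a)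
    ∧ ((∑ l : BV m, ∑ a : BV n, fou (bderiv (cmpnt F l) a) = (2 : ℤ) ^ (n + m))
        ↔ (n ≤ m ∧ Function.Injective F)) := by
  -- rewrite the double sum
  have hrw : ∑ l : BV m, ∑ a : BV n, fou (bderiv (cmpnt F l) a)
      = ∑ x : BV n, ∑ a : BV n, (if F (x + a) = F x then (2:ℤ)^m else 0) := by
    have step1 : ∀ (l : BV m) (a : BV n), fou (bderiv (cmpnt F l) a)
        = ∑ x : BV n, (-1:ℤ)^((∑ i, l i * (F (x + a) i + F x i)).val) := by
      intro l a
      unfold fou bderiv cmpnt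
      refine Finset.sum_congr rfl fun x _ => ?_
      congr 1
      simp [mul_add, Finset.sum_add_distrib]
    calc ∑ l : BV m, ∑ a : BV n, fou (bderiv (cmpnt F l) a)
        = ∑ l : BV m, ∑ a : BV n, ∑ x : BV n,
            (-1:ℤ)^((∑ i, l i * (F (x + a) i + F x i)).val) := by
          exact Finset.sum_congr rfl fun l _ => Finset.sum_congr rfl fun a _ => step1 l a
      _ = ∑ a : BV n, ∑ x : BV n, ∑ l : BV m,
            (-1:ℤ)^((∑ i, l i * (F (x + a) i + F x i)).val) := by
          rw [Finset.sum_comm]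
          exact Finset.sum_congr rfl fun a _ => Finset.sum_comm
      _ = ∑ x : BV n, ∑ a : BV n, ∑ l : BV m,
            (-1:ℤ)^((∑ i, l i * (F (x + a) i + F x i)).val) := Finset.sum_comm
      _ = ∑ x : BV n, ∑ a : BV n, (if F (x + a) = F x then (2:ℤ)^m else 0) := by
          refine Finset.sum_congr rfl fun x _ => Finset.sum_congr rfl fun a _ => ?_
          rw [charSum (fun i => F (x + a) i + F x i)]
          congr 1
          simp only [eq_iff_iff]
          constructor
          · intro h
            funext i
            have := congrFun h i
            simp only [Pi.zero_apply] at this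
            have h2 : ∀ u w : ZMod 2, u + w = 0 → u = w := by decide
            exact h2 _ _ this
          · intro h
            funext i
            simp [congrFun h i, Pi.zero_apply]
            have h2 : ∀ w : ZMod 2, w + w = 0 := by decide
            exact h2 _
  -- pointwise comparison
  have hle : ∀ (x a : BV n),
      (if a = 0 then (2:ℤ)^m else 0) ≤ (if F (x + a) = F x then (2:ℤ)^m else 0) := by
    intro x a
    by_cases ha : a = 0
    · subst ha; simp
    · simp only [if_neg ha]
      positivity
  have hg0 : ∀ x : BV n, ∑ a : BV n, (if a = 0 then (2:ℤ)^m else 0) = (2:ℤ)^m := by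
    intro x
    rw [Finset.sum_ite_eq' Finset.univ (0 : BV n) (fun _ => (2:ℤ)^m)]
    simp
  have hcard : Fintype.card (BV n) = 2 ^ n := by simp [Fintype.card_fun]
  have hconst : ∑ _x : BV n, (2:ℤ)^m = (2:ℤ)^(n+m) := by
    rw [Finset.sum_const, Finset.card_univ, hcard]
    ring
  have hle2 : ∀ x : BV n, (2:ℤ)^m ≤ ∑ a : BV n, (if F (x + a) = F x then (2:ℤ)^m else 0) := by
    intro x
    have h := Finset.sum_le_sum (fun a (_ : a ∈ Finset.univ) => hle x a)
    rwa [hg0 x] at h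
  constructor
  · rw [hrw, ← hconst]
    exact Finset.sum_le_sum fun x _ => hle2 x
  · rw [hrw]
    constructor
    · intro heq
      -- equality forces injectivity
      have h1 : ∀ x ∈ Finset.univ, (2:ℤ)^m
          = ∑ a : BV n, (if F (x + a) = F x then (2:ℤ)^m else 0) := by
        rw [← Finset.sum_eq_sum_iff_of_le (fun x _ => hle2 x)]
        rw [hconst, heq]
      have h2 : ∀ x a : BV n, a ≠ 0 → F (x + a) ≠ F x := by
        intro x a ha
        have := (Finset.sum_eq_sum_iff_of_le (fun a (_ : a ∈ Finset.univ) => hle x a)).1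
          (by rw [hg0 x, ← h1 x (Finset.mem_univ x)]) a (Finset.mem_univ a)
        rw [if_neg ha] at this
        intro hcon
        rw [if_pos hcon] at this
        exact (by positivity : (0:ℤ) < 2^m).ne this
      have hinj : Function.Injective F := by
        intro y z hyz
        by_contra hne
        exact h2 z (y - z) (sub_ne_zero.2 hne) (by rw [add_sub_cancel]; exact hyz)
      refine ⟨?_, hinj⟩
      have := Fintype.card_le_of_injective F hinj
      rw [hcard, (by simp [Fintype.card_fun] : Fintype.card (BV m) = 2 ^ m)] at this
      exact (Nat.pow_le_pow_iff_right (by norm_num)).1 this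
    · rintro ⟨-, hinj⟩
      rw [← hconst]
      refine Finset.sum_congr rfl fun x _ => ?_
      have step : ∑ a : BV n, (if F (x + a) = F x then (2:ℤ)^m else 0)
          = ∑ a : BV n, (if a = 0 then (2:ℤ)^m else 0) := by
        refine Finset.sum_congr rfl fun a _ => ?_
        by_cases ha : a = 0
        · subst ha; simp
        · rw [if_neg ha, if_neg]
          intro hcon
          exact ha (by have := hinj hcon; simpa using (add_left_cancel (a := x) (by rw [add_zero]; exact this)))
      rw [step, hg0 x]
end

section
/- Let F : 𝔽₂ⁿ → 𝔽₂^m be an embedding (i.e., injective) with m ≥ n. Then |C(F)| ≤ 2^{m-n}. Moreover, if |C(F)| = 2^{m-n}, then for every λ ∉ C(F) the component F_λ is balanced (so the remaining 2^m − 2^{m-n} components are balanced). -/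
open Module

/-- The dot-product bilinear form on `BV m`. -/
def dotB (m : ℕ) : LinearMap.BilinForm (ZMod 2) (BV m) :=
  LinearMap.mk₂ (ZMod 2) (fun u v => ∑ i, u i * v i)
    (fun u u' v => by simp [add_mul, Finset.sum_add_distrib])
    (fun a u v => by simp [Finset.mul_sum, mul_assoc])
    (fun u v v' => by simp [mul_add, Finset.sum_add_distrib])
    (fun a u v => by simp [Finset.mul_sum, mul_left_comm])

lemma dotB_apply {m : ℕ} (u v : BV m) : dotB m u v = ∑ i, u i * v i := rfl

lemma dotB_comm {m : ℕ} (u v : BV m) : dotB m u v = dotB m v u := by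
  simp [dotB_apply, mul_comm]

lemma dotB_refl {m : ℕ} : (dotB m).IsRefl := fun u v h => by rwa [dotB_comm]

lemma dotB_nondeg {m : ℕ} : (dotB m).Nondegenerate := by
  refine LinearMap.BilinForm.Nondegenerate.ofSeparatingLeft ?_
  intro u hu
  funext i
  have := hu (Pi.single i 1)
  simpa [dotB_apply, Pi.single_apply, mul_ite, Finset.sum_ite_eq] using this

lemma card_submodule {m : ℕ} (W : Submodule (ZMod 2) (BV m)) :
    Nat.card W = 2 ^ finrank (ZMod 2) W := by
  haveI : Fintype W := Fintype.ofFinite W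
  rw [Nat.card_eq_fintype_card, card_eq_pow_finrank (K := ZMod 2), ZMod.card]

lemma zmod2_cancel : ∀ a b : ZMod 2, a + b = 0 → a = b := by decide

lemma zmod2_ne : ∀ a : ZMod 2, a ≠ 0 → a = 1 := by decide

lemma zmod2_ne1 : ∀ a : ZMod 2, (¬ a = 1) ↔ a = 0 := by decide

/-- For an embedding F with m ≥ n, |C(F)| ≤ 2^(m-n); if equality holds then every
    component outside C(F) is balanced. -/
theorem constant_components (n m : ℕ) (hn : 1 ≤ n) (hnm : n ≤ m) (F : BV n → BV m)
    (hF : Function.Injective F) :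
    {l : BV m | ∃ c, ∀ x, cmpnt F l x = c}.ncard ≤ 2 ^ (m - n)
    ∧ ({l : BV m | ∃ c, ∀ x, cmpnt F l x = c}.ncard = 2 ^ (m - n) →
        ∀ l : BV m, l ∉ {l : BV m | ∃ c, ∀ x, cmpnt F l x = c} →
          IsBalanced (cmpnt F l)) := by
  classical
  set G : BV n → BV m := fun x => F x + F 0 with hGdef
  have hGinj : Function.Injective G := fun a b h => hF (by
    have : F a + F 0 = F b + F 0 := h
    exact add_right_cancel this)
  set V : Submodule (ZMod 2) (BV m) := Submodule.span (ZMod 2) (Set.range G) with hVdef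
  -- dot of G in terms of components
  have hB : ∀ (l : BV m) (x : BV n), dotB m (G x) l = cmpnt F l x + cmpnt F l 0 := by
    intro l x
    simp only [dotB_apply, hGdef, Pi.add_apply, add_mul, Finset.sum_add_distrib, cmpnt]
    congr 1 <;> exact Finset.sum_congr rfl (fun i _ => mul_comm _ _)
  -- the constant-component set equals the orthogonal complement of V
  have hmem : ∀ l : BV m, (∃ c, ∀ x, cmpnt F l x = c) ↔ l ∈ (dotB m).orthogonal V := by
    intro l
    constructor
    · rintro ⟨c, hc⟩
      intro v hv
      have hker : V ≤ LinearMap.ker ((dotB m).flip l) := by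
        rw [hVdef, Submodule.span_le]
        rintro _ ⟨x, rfl⟩
        simp only [SetLike.mem_coe, LinearMap.mem_ker]
        show dotB m (G x) l = 0
        rw [hB l x, hc x, hc 0, CharTwo.add_self_eq_zero]
      have := hker hv
      simpa [LinearMap.BilinForm.IsOrtho, LinearMap.flip_apply] using this
    · intro hl
      refine ⟨cmpnt F l 0, fun x => ?_⟩
      have hx : dotB m (G x) l = 0 := hl (G x) (Submodule.subset_span ⟨x, rfl⟩)
      rw [hB l x] at hx
      exact zmod2_cancel _ _ hx
  have hset : {l : BV m | ∃ c, ∀ x, cmpnt F l x = c} = ((dotB m).orthogonal V : Set (BV m)) := by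
    ext l; exact hmem l
  have hfrk : finrank (ZMod 2) (BV m) = m := by simp
  have hVle : finrank (ZMod 2) V ≤ m := le_trans V.finrank_le (le_of_eq hfrk)
  -- card of the orthogonal complement
  have hcardC : {l : BV m | ∃ c, ∀ x, cmpnt F l x = c}.ncard
      = 2 ^ (m - finrank (ZMod 2) V) := by
    rw [hset, ← Nat.card_coe_set_eq, SetLike.coe_sort_coe, card_submodule,
      LinearMap.BilinForm.finrank_orthogonal dotB_nondeg, hfrk]
  -- lower bound on finrank V
  have hrange_card : (Set.range G).ncard = 2 ^ n := by
    rw [← Nat.card_coe_set_eq, Nat.card_range_of_injective hGinj]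
    simp [Nat.card_eq_fintype_card]
  have hsub : Set.range G ⊆ (V : Set (BV m)) := Submodule.subset_span
  have hcardV : ((V : Set (BV m))).ncard = 2 ^ finrank (ZMod 2) V := by
    rw [← Nat.card_coe_set_eq, SetLike.coe_sort_coe, card_submodule]
  have hnle : n ≤ finrank (ZMod 2) V := by
    have h1 : (2:ℕ) ^ n ≤ 2 ^ finrank (ZMod 2) V := by
      rw [← hrange_card, ← hcardV]
      exact Set.ncard_le_ncard hsub (Set.toFinite _)
    exact (Nat.pow_le_pow_iff_right (by norm_num)).mp h1
  constructor
  · rw [hcardC]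
    exact Nat.pow_le_pow_right (by norm_num) (by omega)
  · intro heq l hl
    -- equality forces finrank V = n
    have hfV : finrank (ZMod 2) V = n := by
      rw [hcardC] at heq
      have := Nat.pow_right_injective (le_refl 2) heq
      omega
    -- hence range G = V
    have hrange : Set.range G = (V : Set (BV m)) := by
      exact Set.eq_of_subset_of_ncard_le hsub (by rw [hrange_card, hcardV, hfV]) (Set.toFinite _)
    -- l is not orthogonal to all of range G : get x0 with dot = 1
    have hnotC : ¬ ∀ x, dotB m (G x) l = 0 := by
      intro hzero
      apply hl
      rw [Set.mem_setOf_eq, hmem l]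
      intro v hv
      have hker : V ≤ LinearMap.ker ((dotB m).flip l) := by
        rw [hVdef, Submodule.span_le]
        rintro _ ⟨x, rfl⟩
        simpa [LinearMap.mem_ker, LinearMap.flip_apply] using hzero x
      have := hker hv
      simpa [LinearMap.BilinForm.IsOrtho, LinearMap.flip_apply] using this
    push_neg at hnotC
    obtain ⟨x0, hx0⟩ := hnotC
    have hx0' : dotB m (G x0) l = 1 := zmod2_ne _ hx0
    -- the translation map
    have hVadd : ∀ x : BV n, ∃ y, G y = G x + G x0 := by
      intro x
      have hmemV : ∀ z : BV n, G z ∈ V := by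
        intro z
        rw [← SetLike.mem_coe, ← hrange]
        exact ⟨z, rfl⟩
      have h1 : G x + G x0 ∈ V := V.add_mem (hmemV x) (hmemV x0)
      rw [← SetLike.mem_coe, ← hrange] at h1
      exact h1
    set σ : BV n → BV n := fun x => Classical.choose (hVadd x) with hσdef
    have hσ : ∀ x, G (σ x) = G x + G x0 := fun x => Classical.choose_spec (hVadd x)
    have hσσ : ∀ x, σ (σ x) = x := by
      intro x
      apply hGinj
      rw [hσ, hσ, add_assoc]
      have : G x0 + G x0 = 0 := by
        funext i
        simp only [Pi.add_apply, Pi.zero_apply]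
        exact CharTwo.add_self_eq_zero _
      rw [this, add_zero]
    have hflip : ∀ x, cmpnt F l (σ x) = cmpnt F l x + 1 := by
      intro x
      have h1 : dotB m (G (σ x)) l = dotB m (G x) l + 1 := by
        rw [hσ x, map_add, LinearMap.add_apply, hx0']
      rw [hB, hB] at h1
      have h2 : cmpnt F l (σ x) + cmpnt F l 0 = (cmpnt F l x + 1) + cmpnt F l 0 := by
        rw [h1]; ring
      exact add_right_cancel h2
    -- counting
    set S1 := Finset.univ.filter (fun x : BV n => cmpnt F l x = 1) with hS1
    set S0 := Finset.univ.filter (fun x : BV n => cmpnt F l x = 0) with hS0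
    have hbij : S0.card = S1.card := by
      apply Finset.card_bij' (fun x _ => σ x) (fun x _ => σ x)
      · intro a ha
        rw [hS0, Finset.mem_filter] at ha
        rw [hS1, Finset.mem_filter]
        refine ⟨Finset.mem_univ _, ?_⟩
        rw [hflip, ha.2, zero_add]
      · intro a ha
        rw [hS1, Finset.mem_filter] at ha
        rw [hS0, Finset.mem_filter]
        refine ⟨Finset.mem_univ _, ?_⟩
        rw [hflip, ha.2]
        decide
      · intro a _; exact hσσ a
      · intro a _; exact hσσ a
    have hsum : S1.card + S0.card = 2 ^ n := by
      have hsplit := Finset.card_filter_add_card_filter_not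
        (s := (Finset.univ : Finset (BV n))) (p := fun x : BV n => cmpnt F l x = 1)
      have hneg : (Finset.univ.filter (fun x : BV n => ¬ cmpnt F l x = 1)) = S0 := by
        rw [hS0]
        exact Finset.filter_congr (fun x _ => zmod2_ne1 _)
      rw [hneg] at hsplit
      rw [← hS1] at hsplit
      have hcard_univ : (Finset.univ : Finset (BV n)).card = 2 ^ n := by
        simp [Finset.card_univ]
      rw [hcard_univ] at hsplit
      exact hsplit
    have hbwt : bwt (cmpnt F l) = S1.card := by
      rw [bwt, Set.ncard_eq_toFinset_card']
      congr 1
      simp [hS1, Set.toFinset_setOf]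
    have hpow : 2 ^ n = 2 ^ (n - 1) * 2 := by
      rw [← pow_succ]
      congr 1
      omega
    rw [IsBalanced, hbwt]
    omega
end

section
/- Let n be odd, m ≥ n + 1, and let F : 𝔽₂ⁿ → 𝔽₂^m be an embedding (i.e., injective) such that every nontrivial component F_λ (λ ≠ 0) is partially-bent. Then |B(F)| ≥ 2^{m-1} + 2^{n-1} − 1, and equality holds if and only if for every λ ≠ 0 with F_λ unbalanced one has dim V(F_λ) = 1 (i.e., F_λ is an unbalanced semi-bent function). -/
namespace Aux

def χ (a : ZMod 2) : ℤ := (-1) ^ a.val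

lemma chi_add (a b : ZMod 2) : χ (a + b) = χ a * χ b := by revert a b; decide

lemma chi_sum {ι : Type*} (s : Finset ι) (g : ι → ZMod 2) :
    χ (∑ i ∈ s, g i) = ∏ i ∈ s, χ (g i) := by
  induction s using Finset.cons_induction with
  | empty => simp [χ]
  | cons a s ha ih => rw [Finset.sum_cons, Finset.prod_cons, chi_add, ih]

lemma fou_chi {n : ℕ} (f : BV n → ZMod 2) : fou f = ∑ x : BV n, χ (f x) := rfl

lemma card_bv (n : ℕ) : Fintype.card (BV n) = 2 ^ n := by
  simp [Fintype.card_fun]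

lemma bwt_eq {n : ℕ} (f : BV n → ZMod 2) :
    bwt f = (Finset.univ.filter (fun x => f x = 1)).card := by
  rw [bwt, Set.ncard_eq_toFinset_card']
  simp [Set.toFinset_setOf]

lemma fou_eq_sub {n : ℕ} (f : BV n → ZMod 2) :
    fou f = 2 ^ n - 2 * (bwt f : ℤ) := by
  have h1 : ∀ a : ZMod 2, χ a = (if a = 1 then (-1 : ℤ) else 1) := by decide
  rw [fou_chi]
  simp_rw [h1]
  rw [Finset.sum_ite, Finset.sum_const, Finset.sum_const, bwt_eq]
  have h2 := Finset.card_filter_add_card_filter_not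
    (s := (Finset.univ : Finset (BV n))) (p := fun x => f x = 1)
  rw [Finset.card_univ, card_bv] at h2
  push_cast
  set w := (Finset.univ.filter (fun x : BV n => f x = 1)).card
  set w' := (Finset.univ.filter (fun x : BV n => ¬ f x = 1)).card
  simp only [nsmul_eq_mul, mul_one, mul_neg_one]
  have h3 : (w : ℤ) + (w' : ℤ) = 2 ^ n := by exact_mod_cast h2
  linarith

lemma balanced_iff_fou {n : ℕ} (hn : n ≠ 0) (f : BV n → ZMod 2) :
    IsBalanced f ↔ fou f = 0 := by
  rw [IsBalanced, fou_eq_sub]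
  have h2 : (2:ℤ)^n = 2*2^(n-1) := by
    nth_rewrite 1 [show n = (n-1)+1 from by omega]; ring
  rw [show (2:ℤ)^(n-1) = ((2^(n-1) : ℕ) : ℤ) from by push_cast; ring] at h2
  constructor
  · intro h; rw [h]; omega
  · intro h; omega


lemma zmod2_cases (a : ZMod 2) : a = 0 ∨ a = 1 := by revert a; decide

lemma bv_add_self {n : ℕ} (a : BV n) : a + a = 0 := by
  have h : ∀ b : ZMod 2, b + b = 0 := by decide
  funext i; exact h (a i)

lemma ncard_setOf {α : Type*} [Fintype α] (p : α → Prop) [DecidablePred p] :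
    {x | p x}.ncard = (Finset.univ.filter p).card := by
  rw [Set.ncard_eq_toFinset_card']
  simp [Set.toFinset_setOf]

lemma fou_const {n : ℕ} {g : BV n → ZMod 2} {c : ZMod 2} (h : ∀ x, g x = c) :
    fou g = χ c * 2 ^ n := by
  rw [fou_chi]
  simp only [h, Finset.sum_const, Finset.card_univ, card_bv, nsmul_eq_mul]
  push_cast; ring

lemma fou_sq {n : ℕ} (f : BV n → ZMod 2) :
    (fou f) ^ 2 = ∑ a : BV n, fou (bderiv f a) := by
  have h0 : (fou f)^2 = ∑ x : BV n, ∑ y : BV n, χ (f x) * χ (f y) := by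
    rw [fou_chi, sq, Finset.sum_mul_sum]
  have step : ∀ x : BV n, (∑ y : BV n, χ (f x) * χ (f y))
      = ∑ a : BV n, χ (bderiv f a x) := by
    intro x
    rw [← Fintype.sum_equiv (Equiv.addLeft x) (fun a => χ (f x) * χ (f (x + a)))
      (fun y => χ (f x) * χ (f y)) (fun a => rfl)]
    apply Finset.sum_congr rfl; intro a _
    rw [show bderiv f a x = f (x + a) + f x from rfl, chi_add]
    ring
  rw [h0]
  simp_rw [step]
  rw [Finset.sum_comm]
  apply Finset.sum_congr rfl; intro a _
  rw [fou_chi]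

lemma balanced_of_deriv_one {n : ℕ} (hn : n ≠ 0) (f : BV n → ZMod 2) (a : BV n)
    (h : ∀ x, bderiv f a x = 1) : IsBalanced f := by
  have key : ∀ x, f (x + a) = f x + 1 := by
    intro x
    have h1 := h x
    have h2 : ∀ u v : ZMod 2, u + v = 1 → u = v + 1 := by decide
    exact h2 _ _ h1
  have hcard : (Finset.univ.filter (fun x : BV n => f x = 1)).card
      = (Finset.univ.filter (fun x : BV n => ¬ f x = 1)).card := by
    apply Finset.card_bij (fun x _ => x + a)
    · intro x hx
      simp only [Finset.mem_filter, Finset.mem_univ, true_and] at hx ⊢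
      rw [key x, hx]; decide
    · intro x _ y _ hxy
      exact add_right_cancel hxy
    · intro y hy
      refine ⟨y + a, ?_, by rw [add_assoc, bv_add_self, add_zero]⟩
      simp only [Finset.mem_filter, Finset.mem_univ, true_and] at hy ⊢
      rw [key y]
      rcases zmod2_cases (f y) with h0 | h0
      · rw [h0]; decide
      · exact absurd h0 hy
  have h2 := Finset.card_filter_add_card_filter_not
    (s := (Finset.univ : Finset (BV n))) (p := fun x => f x = 1)
  rw [Finset.card_univ, card_bv] at h2
  rw [IsBalanced, bwt_eq]
  have h3 : (2:ℕ) ^ n = 2 * 2 ^ (n-1) := by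
    nth_rewrite 1 [show n = (n-1)+1 from by omega]; ring
  rw [h3] at h2
  generalize (2:ℕ)^(n-1) = P at h2 ⊢
  omega

open Classical in
lemma fou_sq_eq {n : ℕ} (hn : n ≠ 0) (f : BV n → ZMod 2)
    (hpb : ∀ a : BV n, (∃ c, ∀ x, bderiv f a x = c) ∨ IsBalanced (bderiv f a))
    (hub : ¬ IsBalanced f) :
    (fou f) ^ 2 = 2 ^ n * ({a : BV n | ∃ c, ∀ x, bderiv f a x = c}.ncard : ℤ) := by
  rw [fou_sq]
  have hterm : ∀ a : BV n, fou (bderiv f a)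
      = if (∃ c, ∀ x, bderiv f a x = c) then (2:ℤ)^n else 0 := by
    intro a
    by_cases hc : ∃ c, ∀ x, bderiv f a x = c
    · rw [if_pos hc]
      obtain ⟨c, hc⟩ := hc
      have hc0 : c = 0 := by
        rcases zmod2_cases c with h0 | h0
        · exact h0
        · exact absurd (balanced_of_deriv_one hn f a (h0 ▸ hc)) hub
      rw [fou_const hc, hc0]
      simp [χ]
    · rw [if_neg hc]
      rcases hpb a with h | h
      · exact absurd h hc
      · rw [balanced_iff_fou hn] at h; exact h
  simp_rw [hterm]
  rw [Finset.sum_ite, Finset.sum_const, Finset.sum_const, smul_zero, add_zero,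
    ncard_setOf]
  simp [nsmul_eq_mul]; ring

lemma char_sum {m : ℕ} (v : BV m) :
    ∑ l : BV m, χ (∑ i, l i * v i) = if v = 0 then (2:ℤ)^m else 0 := by
  classical
  have h1 : ∀ l : BV m, χ (∑ i, l i * v i) = ∏ i, χ (l i * v i) :=
    fun l => chi_sum _ _
  simp_rw [h1]
  rw [← Fintype.piFinset_univ]
  have hps := Finset.prod_univ_sum (fun _ : Fin m => (Finset.univ : Finset (ZMod 2)))
    (fun i b => χ (b * v i))
  rw [← hps]
  have h2 : ∀ w : ZMod 2, (∑ b : ZMod 2, χ (b * w)) = if w = 0 then (2:ℤ) else 0 := by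
    decide
  simp_rw [h2]
  by_cases hv : v = 0
  · subst hv; simp
  · rw [if_neg hv]
    obtain ⟨i, hi⟩ := Function.ne_iff.mp hv
    exact Finset.prod_eq_zero (Finset.mem_univ i) (by rw [if_neg (by simpa using hi)])

lemma bv_add_eq_zero_iff {m : ℕ} (u w : BV m) : u + w = 0 ↔ u = w := by
  constructor
  · intro h
    have : u = -w := eq_neg_of_add_eq_zero_left h
    rw [this]
    funext i
    have hneg : ∀ b : ZMod 2, -b = b := by decide
    exact hneg (w i)
  · intro h; rw [h]; exact bv_add_self w

lemma parseval {n m : ℕ} (F : BV n → BV m) (hF : Function.Injective F) :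
    ∑ l : BV m, (fou (cmpnt F l)) ^ 2 = 2 ^ (n + m) := by
  classical
  have h1 : ∀ l : BV m, (fou (cmpnt F l))^2
      = ∑ x : BV n, ∑ y : BV n, χ (∑ i, l i * (F x i + F y i)) := by
    intro l
    rw [fou_chi, sq, Finset.sum_mul_sum]
    apply Finset.sum_congr rfl; intro x _
    apply Finset.sum_congr rfl; intro y _
    rw [show cmpnt F l x = ∑ i, l i * F x i from rfl,
        show cmpnt F l y = ∑ i, l i * F y i from rfl, ← chi_add]
    congr 1
    rw [← Finset.sum_add_distrib]
    apply Finset.sum_congr rfl; intro i _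
    ring
  simp_rw [h1]
  rw [Finset.sum_comm]
  have h3 : ∀ x y : BV n, (∑ l : BV m, χ (∑ i, l i * (F x i + F y i)))
      = if F x + F y = 0 then (2:ℤ)^m else 0 := fun x y => char_sum (F x + F y)
  have hswap : (∑ x : BV n, ∑ l : BV m, ∑ y : BV n, χ (∑ i, l i * (F x i + F y i)))
      = ∑ x : BV n, ∑ y : BV n, ∑ l : BV m, χ (∑ i, l i * (F x i + F y i)) :=
    Finset.sum_congr rfl (fun x _ => Finset.sum_comm)
  rw [hswap]
  simp_rw [h3]
  have h4 : ∀ x y : BV n, (F x + F y = 0) ↔ (y = x) := by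
    intro x y
    rw [bv_add_eq_zero_iff]
    exact ⟨fun h => (hF h.symm ▸ rfl : y = x), fun h => by rw [h]⟩
  have h5 : ∀ x : BV n, (∑ y : BV n, if F x + F y = 0 then (2:ℤ)^m else 0) = 2^m := by
    intro x
    rw [Finset.sum_congr rfl (fun y _ => if_congr (h4 x y) rfl rfl)]
    rw [Finset.sum_ite_eq' Finset.univ x (fun _ => (2:ℤ)^m)]
    simp
  simp_rw [h5]
  rw [Finset.sum_const, Finset.card_univ, card_bv, nsmul_eq_mul]
  push_cast
  rw [pow_add]

open Classical in
lemma semibent_struct {n : ℕ} (hodd : Odd n) (f : BV n → ZMod 2)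
    (hpb : ∀ a : BV n, (∃ c, ∀ x, bderiv f a x = c) ∨ IsBalanced (bderiv f a))
    (hub : ¬ IsBalanced f) :
    ∃ k : ℕ, Odd k ∧ (fou f)^2 = 2^(n+k) ∧
      (∃ V : Submodule (ZMod 2) (BV n),
        (V : Set (BV n)) = {a : BV n | ∃ c, ∀ x, bderiv f a x = c}) ∧
      (∀ V : Submodule (ZMod 2) (BV n),
        (V : Set (BV n)) = {a : BV n | ∃ c, ∀ x, bderiv f a x = c} →
        Module.finrank (ZMod 2) V = k) := by
  classical
  have hn : n ≠ 0 := by rcases hodd with ⟨j, hj⟩; omega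
  set S : Set (BV n) := {a : BV n | ∃ c, ∀ x, bderiv f a x = c} with hSdef
  have zero_mem : (0 : BV n) ∈ S := by
    refine ⟨0, fun x => ?_⟩
    simp only [bderiv, add_zero]
    exact (by decide : ∀ b : ZMod 2, b + b = 0) (f x)
  have add_mem : ∀ {a b : BV n}, a ∈ S → b ∈ S → a + b ∈ S := by
    rintro a b ⟨c, hc⟩ ⟨d, hd⟩
    refine ⟨c + d, fun x => ?_⟩
    have h1 := hc (x + b)
    have h2 := hd x
    simp only [bderiv] at h1 h2 ⊢
    have e1 : x + (a + b) = (x + b) + a := by ring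
    rw [e1]
    have key : ∀ u v w c d : ZMod 2, u + v = c → v + w = d → u + w = c + d := by decide
    exact key _ _ _ _ _ h1 h2
  let V₀ : Submodule (ZMod 2) (BV n) :=
    { carrier := S
      add_mem' := add_mem
      zero_mem' := zero_mem
      smul_mem' := by
        intro r a ha
        rcases zmod2_cases r with h0 | h0
        · rw [h0, zero_smul]; exact zero_mem
        · rw [h0, one_smul]; exact ha }
  have hcarrier : (V₀ : Set (BV n)) = S := rfl
  set k := Module.finrank (ZMod 2) V₀ with hk
  have hcard : Nat.card V₀ = 2 ^ k := by
    have h := Module.card_eq_pow_finrank (K := ZMod 2) (V := V₀)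
    rw [ZMod.card] at h
    rw [Nat.card_eq_fintype_card, h]
  have hscard : S.ncard = 2 ^ k := by
    rw [← Nat.card_coe_set_eq]
    exact hcard
  have hfou2 : (fou f)^2 = 2^(n+k) := by
    rw [fou_sq_eq hn f hpb hub, ← hSdef, hscard]
    push_cast
    rw [pow_add]
  have hkodd : Odd k := by
    have hne : fou f ≠ 0 := by
      intro h0
      exact hub ((balanced_iff_fou hn f).mpr h0)
    set t := (fou f).natAbs with ht
    have habs : ((t : ℤ)) = |fou f| := by rw [ht]; exact (Int.abs_eq_natAbs _).symm
    have ht2 : (t : ℤ)^2 = 2^(n+k) := by rw [habs, sq_abs]; exact hfou2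
    have htn : t^2 = 2^(n+k) := by exact_mod_cast ht2
    have hdvd : t ∣ 2^(n+k) := htn ▸ dvd_pow_self t (by norm_num)
    obtain ⟨s, _, hs⟩ := (Nat.dvd_prime_pow Nat.prime_two).mp hdvd
    have : 2^(2*s) = 2^(n+k) := by
      rw [← htn, hs]; ring
    have h2s := Nat.pow_right_injective (le_refl 2) this
    rcases hodd with ⟨j, hj⟩
    refine ⟨s - j - 1, by omega⟩
  refine ⟨k, hkodd, hfou2, ⟨V₀, hcarrier⟩, ?_⟩
  intro V hV
  have : V = V₀ := SetLike.coe_injective (by rw [hV, hcarrier])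
  rw [this]

end Aux
open Aux

/-- For n odd, m ≥ n+1, F an embedding whose nontrivial components are all
    partially-bent: |B(F)| ≥ 2^(m-1) + 2^(n-1) − 1, with equality iff every
    unbalanced nontrivial component has a 1-dimensional space of linear structures
    (i.e., is unbalanced semi-bent). -/
theorem least_balanced_components_odd (n m : ℕ) (hodd : Odd n)
    (hnm : n + 1 ≤ m) (F : BV n → BV m) (hF : Function.Injective F)
    (hpb : ∀ l : BV m, l ≠ 0 → ∀ a : BV n,
      (∃ c, ∀ x, bderiv (cmpnt F l) a x = c) ∨ IsBalanced (bderiv (cmpnt F l) a)) :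
    2 ^ (m - 1) + 2 ^ (n - 1) - 1 ≤ {l : BV m | IsBalanced (cmpnt F l)}.ncard
    ∧ ({l : BV m | IsBalanced (cmpnt F l)}.ncard = 2 ^ (m - 1) + 2 ^ (n - 1) - 1 ↔
        ∀ l : BV m, l ≠ 0 → ¬ IsBalanced (cmpnt F l) →
          ∀ V : Submodule (ZMod 2) (BV n),
            (V : Set (BV n)) = {a : BV n | ∃ c, ∀ x, bderiv (cmpnt F l) a x = c} →
            Module.finrank (ZMod 2) V = 1) := by
  classical
  have hn : n ≠ 0 := by rcases hodd with ⟨j, hj⟩; omega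
  have hm : m ≠ 0 := by omega
  set Bs : Finset (BV m) := Finset.univ.filter (fun l => IsBalanced (cmpnt F l)) with hBs
  set T : Finset (BV m) := Finset.univ.filter
    (fun l => l ≠ 0 ∧ ¬ IsBalanced (cmpnt F l)) with hT
  have hmemT : ∀ l, l ∈ T ↔ (l ≠ 0 ∧ ¬ IsBalanced (cmpnt F l)) := by
    intro l; simp [hT]
  have hmemB : ∀ l, l ∈ Bs ↔ IsBalanced (cmpnt F l) := by intro l; simp [hBs]
  have hcz : ∀ x, cmpnt F 0 x = (0 : ZMod 2) := by intro x; simp [cmpnt]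
  have hfou0 : fou (cmpnt F 0) = 2^n := by
    rw [fou_const hcz]; simp [χ]
  have h0nb : ¬ IsBalanced (cmpnt F 0) := by
    rw [balanced_iff_fou hn, hfou0]
    positivity
  -- choose structure data on T
  have hstruct : ∀ l ∈ T, ∃ k : ℕ, Odd k ∧ (fou (cmpnt F l))^2 = 2^(n+k) ∧
      (∃ V : Submodule (ZMod 2) (BV n),
        (V : Set (BV n)) = {a : BV n | ∃ c, ∀ x, bderiv (cmpnt F l) a x = c}) ∧
      (∀ V : Submodule (ZMod 2) (BV n),
        (V : Set (BV n)) = {a : BV n | ∃ c, ∀ x, bderiv (cmpnt F l) a x = c} →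
        Module.finrank (ZMod 2) V = k) := by
    intro l hl
    rw [hmemT] at hl
    exact semibent_struct hodd (cmpnt F l) (hpb l hl.1) hl.2
  choose k hkodd hkfou hkex hkdim using hstruct
  have hk1 : ∀ l (hl : l ∈ T), 1 ≤ k l hl := by
    intro l hl
    rcases hkodd l hl with ⟨j, hj⟩; omega
  -- sum over T
  set P1 : ℤ := 2^(n+1) with hP1
  set A : ℤ := 2^(m-1) with hA
  set B : ℤ := 2^(n-1) with hB
  have hPA : (2:ℤ)^(n+m) = P1 * A := by rw [hP1, hA, ← pow_add]; congr 1; omega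
  have hPB : (2:ℤ)^(2*n) = P1 * B := by rw [hP1, hB, ← pow_add]; congr 1; omega
  have hsplit : ∑ l ∈ T, (fou (cmpnt F l))^2 = P1 * A - P1 * B := by
    have e1 := Finset.add_sum_erase Finset.univ (fun l => (fou (cmpnt F l))^2)
      (Finset.mem_univ (0 : BV m))
    have e2 : ∑ l ∈ Finset.univ.erase (0 : BV m), (fou (cmpnt F l))^2
        = ∑ l ∈ T, (fou (cmpnt F l))^2 := by
      symm
      apply Finset.sum_subset
      · intro l hl
        rw [hmemT] at hl
        exact Finset.mem_erase.mpr ⟨hl.1, Finset.mem_univ l⟩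
      · intro l hl hnl
        rw [Finset.mem_erase] at hl
        rw [hmemT] at hnl
        have hbal : IsBalanced (cmpnt F l) := by tauto
        rw [balanced_iff_fou hn] at hbal
        rw [hbal]; ring
    have e3 : (fou (cmpnt F 0))^2 = 2^(2*n) := by
      rw [hfou0, ← pow_mul]; ring_nf
    rw [parseval F hF] at e1
    simp only [e2, e3, hPA, hPB] at e1
    linarith
  have hlow : ∀ l (hl : l ∈ T), P1 ≤ (fou (cmpnt F l))^2 := by
    intro l hl
    rw [hkfou l hl, hP1]
    exact pow_le_pow_right₀ (by norm_num) (by have := hk1 l hl; omega)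
  have hge : (T.card : ℤ) * P1 ≤ P1 * A - P1 * B := by
    rw [← hsplit]
    have := Finset.card_nsmul_le_sum T (fun l => (fou (cmpnt F l))^2) P1
      (fun l hl => hlow l hl)
    rwa [nsmul_eq_mul] at this
  have hP1pos : (0:ℤ) < P1 := by rw [hP1]; positivity
  have hTle : (T.card : ℤ) ≤ A - B := by
    have h := hge
    nlinarith
  -- cardinality partition
  have hdisj : Disjoint Bs T := by
    rw [Finset.disjoint_left]
    intro l hlB hlT
    rw [hmemB] at hlB; rw [hmemT] at hlT; exact hlT.2 hlB
  have hunion : Bs ∪ T = Finset.univ.erase 0 := by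
    ext l
    rw [Finset.mem_union, hmemB, hmemT, Finset.mem_erase]
    constructor
    · rintro (h | h)
      · exact ⟨fun h0 => h0nb (h0 ▸ h), Finset.mem_univ l⟩
      · exact ⟨h.1, Finset.mem_univ l⟩
    · rintro ⟨h1, -⟩
      by_cases hb : IsBalanced (cmpnt F l)
      · exact Or.inl hb
      · exact Or.inr ⟨h1, hb⟩
  have hBT : Bs.card + T.card + 1 = 2^m := by
    have hcu := Finset.card_union_of_disjoint hdisj
    rw [hunion, Finset.card_erase_of_mem (Finset.mem_univ _), Finset.card_univ,
      card_bv] at hcu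
    have h1 : (1:ℕ) ≤ 2^m := Nat.one_le_two_pow
    generalize (2:ℕ)^m = M at hcu h1 ⊢
    omega
  have hset : {l : BV m | IsBalanced (cmpnt F l)}.ncard = Bs.card := by
    rw [hBs]; exact ncard_setOf _
  -- numeric facts for omega
  have h2m : (2:ℕ)^m = 2 * 2^(m-1) := by
    nth_rewrite 1 [show m = (m-1)+1 from by omega]; ring
  have hAc : A = ((2^(m-1) : ℕ) : ℤ) := by rw [hA]; push_cast; ring
  have hBc : B = ((2^(n-1) : ℕ) : ℤ) := by rw [hB]; push_cast; ring
  have hTle' : (T.card : ℤ) ≤ ((2^(m-1) : ℕ) : ℤ) - ((2^(n-1) : ℕ) : ℤ) := by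
    rw [← hAc, ← hBc]; exact hTle
  rw [hset]
  have hfirst : 2 ^ (m - 1) + 2 ^ (n - 1) - 1 ≤ Bs.card := by
    rw [h2m] at hBT
    generalize (2:ℕ)^(m-1) = a at hBT hTle' ⊢
    generalize (2:ℕ)^(n-1) = b at hTle' ⊢
    omega
  refine ⟨hfirst, ?_⟩
  constructor
  · -- equality implies dim 1
    intro heq
    have hTcard : (T.card : ℤ) = A - B := by
      rw [hAc, hBc]
      rw [h2m] at hBT
      generalize (2:ℕ)^(m-1) = a at hBT hTle' heq ⊢
      generalize (2:ℕ)^(n-1) = b at hTle' heq ⊢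
      omega
    have hsum_eq : ∑ l ∈ T, (fou (cmpnt F l))^2 = ∑ _l ∈ T, P1 := by
      rw [Finset.sum_const, nsmul_eq_mul, hsplit, hTcard]; ring
    have hall : ∀ l (hl : l ∈ T), (fou (cmpnt F l))^2 = P1 := by
      by_contra hcon
      push_neg at hcon
      obtain ⟨l0, hl0, hne⟩ := hcon
      have hlt : ∑ l ∈ T, P1 < ∑ l ∈ T, (fou (cmpnt F l))^2 :=
        Finset.sum_lt_sum (fun i hi => hlow i hi)
          ⟨l0, hl0, lt_of_le_of_ne (hlow l0 hl0) (Ne.symm hne)⟩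
      omega
    intro l hl0 hlnb V hV
    have hlT : l ∈ T := (hmemT l).mpr ⟨hl0, hlnb⟩
    have hk1' : k l hlT = 1 := by
      have h1 := hall l hlT
      rw [hkfou l hlT, hP1] at h1
      have h2 : (2:ℕ)^(n + k l hlT) = 2^(n+1) := by exact_mod_cast h1
      have := Nat.pow_right_injective (le_refl 2) h2
      omega
    rw [← hk1']
    exact hkdim l hlT V hV
  · -- dim 1 implies equality
    intro hdim
    have hall : ∀ l (hl : l ∈ T), (fou (cmpnt F l))^2 = P1 := by
      intro l hl
      obtain ⟨V, hV⟩ := hkex l hl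
      have h1 : Module.finrank (ZMod 2) V = 1 :=
        hdim l ((hmemT l).mp hl).1 ((hmemT l).mp hl).2 V hV
      have h2 := hkdim l hl V hV
      have hk1' : k l hl = 1 := by rw [← h2, h1]
      rw [hkfou l hl, hk1', hP1]
    have hsum_eq : ∑ l ∈ T, (fou (cmpnt F l))^2 = (T.card : ℤ) * P1 := by
      rw [Finset.sum_congr rfl (fun l hl => hall l hl), Finset.sum_const,
        nsmul_eq_mul]
    have hTcard : (T.card : ℤ) = A - B := by
      rw [hsum_eq] at hsplit
      have : (T.card : ℤ) * P1 = (A - B) * P1 := by linarith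
      exact mul_right_cancel₀ (ne_of_gt hP1pos) this
    rw [hAc, hBc] at hTcard
    rw [h2m] at hBT
    generalize (2:ℕ)^(m-1) = a at hBT hTcard ⊢
    generalize (2:ℕ)^(n-1) = b at hTcard ⊢
    omega
end

section
/- Let F : 𝔽₂ⁿ → 𝔽₂^{n+1} be an embedding (i.e., injective). Then exactly one of the following holds: (i) |C(F)| = 2, i.e., there is exactly one nonzero λ with F_λ constant, and in this case F_μ is balanced for every μ ∉ C(F); or (ii) |C(F)| = 1, i.e., F has no constant nontrivial component. -/
/-- Dot product over 𝔽₂. -/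
def dotf {m : ℕ} (l y : BV m) : ZMod 2 := ∑ i, l i * y i

lemma cmpnt_eq_dotf {n m : ℕ} (F : BV n → BV m) (l : BV m) (x : BV n) :
    cmpnt F l x = dotf l (F x) := rfl

lemma dotf_add_right {m : ℕ} (l y z : BV m) : dotf l (y + z) = dotf l y + dotf l z := by
  simp [dotf, mul_add, Finset.sum_add_distrib]

lemma dotf_add_left {m : ℕ} (l k y : BV m) : dotf (l + k) y = dotf l y + dotf k y := by
  simp [dotf, add_mul, Finset.sum_add_distrib]

lemma dotf_single {m : ℕ} (l : BV m) (j : Fin m) : dotf l (Pi.single j 1) = l j := by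
  classical
  simp [dotf, Pi.single_apply, mul_ite, Finset.sum_ite_eq']

lemma card_BV_s13 (m : ℕ) : Nat.card (BV m) = 2 ^ m := by
  simp [Nat.card_eq_fintype_card]

lemma fiber_ncard {m : ℕ} (l : BV m) (hl : l ≠ 0) (c : ZMod 2) :
    {y : BV m | dotf l y = c}.ncard = 2 ^ (m - 1) := by
  obtain ⟨j, hj⟩ := Function.ne_iff.mp hl
  have hm : 1 ≤ m := j.pos
  have hj1 : l j = 1 := by
    have : ∀ u : ZMod 2, u ≠ 0 → u = 1 := by decide
    exact this _ hj
  have hginj : Function.Injective (fun y : BV m => y + Pi.single j 1) :=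
    add_left_injective _
  have key : ∀ d : ZMod 2, d + 1 + 1 = d := by decide
  have himg : ∀ d : ZMod 2,
      (fun y : BV m => y + Pi.single j 1) '' {y | dotf l y = d} = {y | dotf l y = d + 1} := by
    intro d
    ext z
    simp only [Set.mem_image, Set.mem_setOf_eq]
    constructor
    · rintro ⟨y, hy, rfl⟩
      rw [dotf_add_right, hy, dotf_single, hj1]
    · intro hz
      refine ⟨z + Pi.single j 1, ?_, ?_⟩
      · rw [dotf_add_right, hz, dotf_single, hj1, key]
      · funext i
        simp [add_assoc, CharTwo.add_self_eq_zero]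
  have hcard : ∀ d : ZMod 2, {y : BV m | dotf l y = d}.ncard = {y : BV m | dotf l y = d + 1}.ncard := by
    intro d
    rw [← himg d, Set.ncard_image_of_injective _ hginj]
  have hunion : {y : BV m | dotf l y = c} ∪ {y : BV m | dotf l y = c + 1} = Set.univ := by
    ext y
    have : ∀ u d : ZMod 2, u = d ∨ u = d + 1 := by decide
    simpa using this (dotf l y) c
  have hdisj : Disjoint {y : BV m | dotf l y = c} {y : BV m | dotf l y = c + 1} := by
    rw [Set.disjoint_left]
    intro y hy hy'
    have hcne : ∀ c : ZMod 2, c ≠ c + 1 := by decide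
    exact hcne c (hy ▸ hy')
  have htot : {y : BV m | dotf l y = c}.ncard + {y : BV m | dotf l y = c + 1}.ncard = 2 ^ m := by
    rw [← Set.ncard_union_eq hdisj (Set.toFinite _) (Set.toFinite _), hunion, Set.ncard_univ,
      card_BV_s13]
  have hpow : 2 ^ m = 2 * 2 ^ (m - 1) := by
    rw [← pow_succ']
    congr 1
    omega
  rw [← hcard c] at htot
  omega

lemma range_eq {n : ℕ} (F : BV n → BV (n + 1)) (hF : Function.Injective F)
    (l : BV (n + 1)) (hl : l ≠ 0) (c : ZMod 2) (h : ∀ x, dotf l (F x) = c) :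
    Set.range F = {y : BV (n + 1) | dotf l y = c} := by
  have hsub : Set.range F ⊆ {y : BV (n + 1) | dotf l y = c} := by
    rintro y ⟨x, rfl⟩; exact h x
  have hc1 : (Set.range F).ncard = 2 ^ n := by
    rw [← Set.image_univ, Set.ncard_image_of_injective _ hF, Set.ncard_univ, card_BV_s13]
  have hc2 : {y : BV (n + 1) | dotf l y = c}.ncard = 2 ^ n := by
    simpa using fiber_ncard l hl c
  exact Set.eq_of_subset_of_ncard_le hsub (by rw [hc1, hc2]) (Set.toFinite _)

lemma nonzero_unique {n : ℕ} (F : BV n → BV (n + 1)) (hF : Function.Injective F)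
    (l₁ l₂ : BV (n + 1)) (c₁ c₂ : ZMod 2)
    (h₁ : ∀ x, dotf l₁ (F x) = c₁) (h₂ : ∀ x, dotf l₂ (F x) = c₂)
    (hl₁ : l₁ ≠ 0) (hl₂ : l₂ ≠ 0) : l₁ = l₂ := by
  by_contra hne
  have hr₁ := range_eq F hF l₁ hl₁ c₁ h₁
  have hr₂ := range_eq F hF l₂ hl₂ c₂ h₂
  obtain ⟨j, hj⟩ := Function.ne_iff.mp hne
  set w : BV (n + 1) := F 0 + Pi.single j 1 with hw
  have e₁ : dotf l₁ w = c₁ + l₁ j := by rw [hw, dotf_add_right, dotf_single, h₁]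
  have e₂ : dotf l₂ w = c₂ + l₂ j := by rw [hw, dotf_add_right, dotf_single, h₂]
  have hiff : dotf l₁ w = c₁ ↔ dotf l₂ w = c₂ := by
    have : w ∈ {y : BV (n+1) | dotf l₁ y = c₁} ↔ w ∈ {y : BV (n+1) | dotf l₂ y = c₂} := by
      rw [← hr₁, ← hr₂]
    simpa using this
  rw [e₁, e₂] at hiff
  have : ∀ u v a b : ZMod 2, u ≠ v → ((a + u = a ↔ b + v = b) → False) := by decide
  exact this _ _ _ _ hj hiff

/-- For an embedding F : 𝔽₂ⁿ → 𝔽₂^(n+1), either |C(F)| = 2 (exactly one constant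
    nontrivial component) and every component outside C(F) is balanced, or
    |C(F)| = 1 (no constant nontrivial component). -/
theorem no_constants (n : ℕ) (F : BV n → BV (n + 1)) (hF : Function.Injective F) :
    ({l : BV (n + 1) | ∃ c, ∀ x, cmpnt F l x = c}.ncard = 2
      ∧ ∀ l : BV (n + 1), l ∉ {l : BV (n + 1) | ∃ c, ∀ x, cmpnt F l x = c} →
          IsBalanced (cmpnt F l))
    ∨ {l : BV (n + 1) | ∃ c, ∀ x, cmpnt F l x = c}.ncard = 1 := by
  set S := {l : BV (n + 1) | ∃ c, ∀ x, cmpnt F l x = c} with hSdef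
  have h0 : (0 : BV (n + 1)) ∈ S := ⟨0, fun x => by simp [cmpnt]⟩
  by_cases hex : ∃ l ∈ S, l ≠ 0
  · obtain ⟨l₀, hl₀S, hl₀⟩ := hex
    obtain ⟨c₀, hc₀⟩ := hl₀S
    simp only [cmpnt_eq_dotf] at hc₀
    have hrange : Set.range F = {y : BV (n + 1) | dotf l₀ y = c₀} :=
      range_eq F hF l₀ hl₀ c₀ hc₀
    have huniq : ∀ l ∈ S, l ≠ 0 → l = l₀ := by
      intro l hlS hl
      obtain ⟨c, hc⟩ := hlS
      simp only [cmpnt_eq_dotf] at hc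
      exact nonzero_unique F hF l l₀ c c₀ hc hc₀ hl hl₀
    have hS : S = {0, l₀} := by
      ext l
      constructor
      · intro hl
        by_cases h : l = 0
        · exact Or.inl h
        · exact Or.inr (huniq l hl h)
      · rintro (rfl | rfl)
        · exact h0
        · exact ⟨c₀, fun x => hc₀ x⟩
    left
    constructor
    · rw [hS]
      exact Set.ncard_pair (Ne.symm hl₀)
    · intro μ hμ
      have hμ0 : μ ≠ 0 := fun h => hμ (h ▸ h0)
      have hμl₀ : μ ≠ l₀ := fun h => hμ (h ▸ ⟨c₀, fun x => hc₀ x⟩)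
      have hμc : ¬ (∃ c, ∀ x, dotf μ (F x) = c) := by
        intro ⟨c, hc⟩
        exact hμ ⟨c, fun x => by rw [cmpnt_eq_dotf]; exact hc x⟩
      -- n ≥ 1
      have hn : 1 ≤ n := by
        by_contra h
        have hn0 : n = 0 := by omega
        subst hn0
        apply hμl₀
        funext i
        have hi : i = 0 := Fin.fin_one_eq_zero i
        obtain ⟨j, hj⟩ := Function.ne_iff.mp hμ0
        obtain ⟨k, hk⟩ := Function.ne_iff.mp hl₀
        have hj0 : j = 0 := Fin.fin_one_eq_zero j
        have hk0 : k = 0 := Fin.fin_one_eq_zero k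
        subst hj0; subst hk0
        simp only [Pi.zero_apply] at hj hk
        have h1 : ∀ u : ZMod 2, u ≠ 0 → u = 1 := by decide
        rw [hi, h1 _ hj, h1 _ hk]
      have hsum : l₀ + μ ≠ 0 := by
        intro h
        apply hμl₀
        funext i
        have := congrFun h i
        simp only [Pi.add_apply, Pi.zero_apply] at this
        have h2 : ∀ u v : ZMod 2, u + v = 0 → v = u := by decide
        exact h2 _ _ this
      -- the four quadrants
      set A := {y : BV (n + 1) | dotf l₀ y = c₀ ∧ dotf μ y = 0} with hA
      set B := {y : BV (n + 1) | dotf l₀ y = c₀ ∧ dotf μ y = 1} with hB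
      set C := {y : BV (n + 1) | dotf l₀ y = c₀ + 1 ∧ dotf μ y = 0} with hC
      set D := {y : BV (n + 1) | dotf l₀ y = c₀ + 1 ∧ dotf μ y = 1} with hD
      have hdisjAB : Disjoint A B := by
        rw [Set.disjoint_left]; rintro y ⟨_, hy⟩ ⟨_, hy'⟩
        exact (by decide : (0 : ZMod 2) ≠ 1) (hy ▸ hy')
      have hdisjCD : Disjoint C D := by
        rw [Set.disjoint_left]; rintro y ⟨_, hy⟩ ⟨_, hy'⟩
        exact (by decide : (0 : ZMod 2) ≠ 1) (hy ▸ hy')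
      have hdisjBD : Disjoint B D := by
        rw [Set.disjoint_left]; rintro y ⟨hy, _⟩ ⟨hy', _⟩
        have hcne : ∀ c : ZMod 2, c ≠ c + 1 := by decide
        exact hcne c₀ (hy ▸ hy')
      have hdisjBC : Disjoint B C := by
        rw [Set.disjoint_left]; rintro y ⟨hy, _⟩ ⟨hy', _⟩
        have hcne : ∀ c : ZMod 2, c ≠ c + 1 := by decide
        exact hcne c₀ (hy ▸ hy')
      have hzo : ∀ u : ZMod 2, u = 0 ∨ u = 1 := by decide
      have h1 : A.ncard + B.ncard = 2 ^ n := by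
        rw [← Set.ncard_union_eq hdisjAB (Set.toFinite _) (Set.toFinite _)]
        have : A ∪ B = {y : BV (n + 1) | dotf l₀ y = c₀} := by
          ext y
          simp only [hA, hB, Set.mem_union, Set.mem_setOf_eq]
          rcases hzo (dotf μ y) with h | h <;> simp [h]
        rw [this]
        simpa using fiber_ncard l₀ hl₀ c₀
      have h2 : C.ncard + D.ncard = 2 ^ n := by
        rw [← Set.ncard_union_eq hdisjCD (Set.toFinite _) (Set.toFinite _)]
        have : C ∪ D = {y : BV (n + 1) | dotf l₀ y = c₀ + 1} := by
          ext y
          simp only [hC, hD, Set.mem_union, Set.mem_setOf_eq]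
          rcases hzo (dotf μ y) with h | h <;> simp [h]
        rw [this]
        simpa using fiber_ncard l₀ hl₀ (c₀ + 1)
      have h3 : B.ncard + D.ncard = 2 ^ n := by
        rw [← Set.ncard_union_eq hdisjBD (Set.toFinite _) (Set.toFinite _)]
        have : B ∪ D = {y : BV (n + 1) | dotf μ y = 1} := by
          ext y
          simp only [hB, hD, Set.mem_union, Set.mem_setOf_eq]
          rcases hzo (dotf l₀ y) with h | h
          · have hc : dotf l₀ y = c₀ ∨ dotf l₀ y = c₀ + 1 := by
              rcases hzo c₀ with h' | h' <;> rw [h, h'] <;> decide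
            tauto
          · have hc : dotf l₀ y = c₀ ∨ dotf l₀ y = c₀ + 1 := by
              rcases hzo c₀ with h' | h' <;> rw [h, h'] <;> decide
            tauto
        rw [this]
        simpa using fiber_ncard μ hμ0 1
      have h4 : B.ncard + C.ncard = 2 ^ n := by
        rw [← Set.ncard_union_eq hdisjBC (Set.toFinite _) (Set.toFinite _)]
        have : B ∪ C = {y : BV (n + 1) | dotf (l₀ + μ) y = c₀ + 1} := by
          ext y
          simp only [hB, hC, Set.mem_union, Set.mem_setOf_eq, dotf_add_left]
          have : ∀ u v c : ZMod 2,
              ((u = c ∧ v = 1) ∨ (u = c + 1 ∧ v = 0)) ↔ u + v = c + 1 := by decide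
          exact this _ _ _
        rw [this]
        simpa using fiber_ncard (l₀ + μ) hsum (c₀ + 1)
      have hpow : 2 ^ n = 2 * 2 ^ (n - 1) := by
        rw [← pow_succ']
        congr 1
        omega
      have hBcard : B.ncard = 2 ^ (n - 1) := by omega
      -- bwt (cmpnt F μ) = B.ncard
      have himg : F '' {x | cmpnt F μ x = 1} = B := by
        ext y
        constructor
        · rintro ⟨x, hx, rfl⟩
          exact ⟨hc₀ x, hx⟩
        · rintro ⟨hy1, hy2⟩
          have : y ∈ Set.range F := by rw [hrange]; exact hy1
          obtain ⟨x, rfl⟩ := this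
          exact ⟨x, hy2, rfl⟩
      show bwt (cmpnt F μ) = 2 ^ (n - 1)
      rw [bwt, ← hBcard, ← himg, Set.ncard_image_of_injective _ hF]
  · right
    have hS : S = {0} := by
      ext l
      constructor
      · intro hl
        push_neg at hex
        exact hex l hl
      · rintro rfl; exact h0
    rw [hS, Set.ncard_singleton]
end

section
/- Let F : 𝔽₂ⁿ → 𝔽₂^m be an embedding (i.e., injective) with m ≥ n, and suppose Im(F) is an affine subspace of 𝔽₂^m (i.e., a coset t + W of a linear subspace W). Then (i) every component F_λ is either constant or balanced, and (ii) |B(F)| = 2^m − 2^{m-n} and |C(F)| = 2^{m-n}. -/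
lemma zmod2_cases (a : ZMod 2) : a = 0 ∨ a = 1 := by revert a; decide

lemma bwt_eq_filter {n : ℕ} (f : BV n → ZMod 2) :
    bwt f = (Finset.univ.filter (fun x => f x = 1)).card := by
  rw [bwt, ← Set.ncard_coe_finset]
  congr 1
  ext x; simp

lemma pow_split (n : ℕ) (hn : 1 ≤ n) : 2 ^ n = 2 ^ (n - 1) + 2 ^ (n - 1) := by
  have h1 : n - 1 + 1 = n := by omega
  conv_lhs => rw [← h1]
  rw [pow_succ]; ring

lemma balanced_of_flip {n : ℕ} (hn : 1 ≤ n) (f : BV n → ZMod 2) (σ : BV n ≃ BV n)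
    (hσ : ∀ x, f (σ x) = f x + 1) : IsBalanced f := by
  classical
  have himg : (Finset.univ.filter (fun x => f x = 1)).image σ
      = Finset.univ.filter (fun x => ¬ f x = 1) := by
    ext y
    simp only [Finset.mem_image, Finset.mem_filter, Finset.mem_univ, true_and]
    constructor
    · rintro ⟨x, hx, rfl⟩
      rw [hσ x, hx]; decide
    · intro hy
      refine ⟨σ.symm y, ?_, by simp⟩
      have := hσ (σ.symm y)
      rw [Equiv.apply_symm_apply] at this
      rcases zmod2_cases (f (σ.symm y)) with h | h
      · rw [h] at this; simp at this; exact absurd this hy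
      · exact h
  have hcard : (Finset.univ.filter (fun x => f x = 1)).card
      = (Finset.univ.filter (fun x => ¬ f x = 1)).card := by
    rw [← himg, Finset.card_image_of_injective _ σ.injective]
  have htot := Finset.card_filter_add_card_filter_not
    (s := (Finset.univ : Finset (BV n))) (p := fun x => f x = 1)
  rw [← hcard] at htot
  have hc : Fintype.card (BV n) = 2 ^ n := by
    simp [Fintype.card_fun]
  rw [Finset.card_univ, hc] at htot
  rw [IsBalanced, bwt_eq_filter]
  have hpow := pow_split n hn
  omega

lemma not_balanced_const {n : ℕ} (hn : 1 ≤ n) (c : ZMod 2) :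
    ¬ IsBalanced (fun _ : BV n => c) := by
  intro h
  rw [IsBalanced, bwt] at h
  have hpos : 0 < 2 ^ (n - 1) := Nat.pow_pos (by norm_num)
  rcases zmod2_cases c with rfl | rfl
  · have : ({x : BV n | (0 : ZMod 2) = 1} : Set (BV n)) = ∅ := by
      ext x
      simp only [Set.mem_setOf_eq, Set.mem_empty_iff_false, iff_false]
      decide
    rw [this, Set.ncard_empty] at h
    omega
  · have : ({x : BV n | (1 : ZMod 2) = 1} : Set (BV n)) = Set.univ := by
      ext x; simp
    rw [this, Set.ncard_univ, Nat.card_eq_fintype_card] at h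
    have hc : Fintype.card (BV n) = 2 ^ n := by simp [Fintype.card_fun]
    rw [hc] at h
    have := pow_split n hn
    omega

/-- dot product over 𝔽₂. -/
def dot {m : ℕ} (l v : BV m) : ZMod 2 := ∑ i, l i * v i

lemma dot_add_right {m : ℕ} (l v w : BV m) : dot l (v + w) = dot l v + dot l w := by
  simp [dot, mul_add, Finset.sum_add_distrib]

lemma dot_zero_right {m : ℕ} (l : BV m) : dot l 0 = 0 := by simp [dot]

lemma cmpnt_eq_dot {n m : ℕ} (F : BV n → BV m) (l : BV m) (x : BV n) :
    cmpnt F l x = dot l (F x) := rfl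


/-- For an embedding F with m ≥ n whose image is an affine subspace of 𝔽₂^m:
    (i) every component is constant or balanced;
    (ii) F has exactly 2^m − 2^(m-n) balanced components and 2^(m-n) constant
    components. -/
theorem balanced_ImageSpace (n m : ℕ) (hn : 1 ≤ n) (hnm : n ≤ m) (F : BV n → BV m)
    (hF : Function.Injective F)
    (haff : ∃ (W : Submodule (ZMod 2) (BV m)) (t : BV m),
      Set.range F = {v : BV m | ∃ w ∈ W, v = t + w}) :
    (∀ l : BV m, (∃ c, ∀ x, cmpnt F l x = c) ∨ IsBalanced (cmpnt F l))
    ∧ {l : BV m | IsBalanced (cmpnt F l)}.ncard = 2 ^ m - 2 ^ (m - n)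
    ∧ {l : BV m | ∃ c, ∀ x, cmpnt F l x = c}.ncard = 2 ^ (m - n) := by
  classical
  obtain ⟨W, t, hWt⟩ := haff
  have char2 : ∀ v : BV m, v + v = 0 := by
    intro v; funext i
    simp [Pi.add_apply, CharTwo.add_self_eq_zero]
  set g : BV n → BV m := fun x => F x + t with hg
  have hmem : ∀ x, g x ∈ W := by
    intro x
    have hx : F x ∈ Set.range F := ⟨x, rfl⟩
    rw [hWt] at hx
    obtain ⟨w, hw, hFw⟩ := hx
    have : g x = w := by
      rw [hg]; simp only
      rw [hFw]
      calc t + w + t = w + (t + t) := by ring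
        _ = w := by rw [char2]; ring
    rw [this]; exact hw
  have hFx : ∀ x, F x = t + g x := by
    intro x
    rw [hg]; simp only
    calc F x = t + (F x + t) := by rw [show t + (F x + t) = F x + (t + t) by ring, char2]; ring
      _ = t + (F x + t) := rfl
  have hginj : Function.Injective g := fun a b hab => hF (add_right_cancel hab)
  have hgsurj : ∀ w ∈ W, ∃ x, g x = w := by
    intro w hw
    have : t + w ∈ Set.range F := by rw [hWt]; exact ⟨w, hw, rfl⟩
    obtain ⟨x, hx⟩ := this
    refine ⟨x, ?_⟩
    rw [hg]; simp only [hx]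
    calc t + w + t = w + (t + t) := by ring
      _ = w := by rw [char2]; ring
  -- the equivalence with W
  let e : BV n ≃ W := Equiv.ofBijective (fun x => ⟨g x, hmem x⟩)
    ⟨fun a b hab => hginj (congrArg Subtype.val hab),
     fun ⟨w, hw⟩ => by obtain ⟨x, hx⟩ := hgsurj w hw; exact ⟨x, Subtype.ext hx⟩⟩
  have hcmp : ∀ l x, cmpnt F l x = dot l t + dot l (g x) := by
    intro l x
    rw [cmpnt_eq_dot, hFx x, dot_add_right]
  -- dichotomy
  have key : ∀ l : BV m, (¬ ∀ w ∈ W, dot l w = 0) → IsBalanced (cmpnt F l) := by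
    intro l hl
    push_neg at hl
    obtain ⟨w₀, hw₀, hw₀ne⟩ := hl
    have hw₀1 : dot l w₀ = 1 := (zmod2_cases _).resolve_left hw₀ne
    let σ : BV n ≃ BV n := e.trans ((Equiv.addRight (⟨w₀, hw₀⟩ : W)).trans e.symm)
    apply balanced_of_flip hn _ σ
    intro x
    have hgs : g (σ x) = g x + w₀ := by
      have : e (σ x) = e x + ⟨w₀, hw₀⟩ := by
        simp [σ, Equiv.apply_symm_apply]
      have := congrArg Subtype.val this
      simpa [e, Equiv.ofBijective] using this
    rw [hcmp, hcmp, hgs, dot_add_right, hw₀1]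
    ring
  have hconst : ∀ l : BV m, (∀ w ∈ W, dot l w = 0) → ∀ x, cmpnt F l x = dot l t := by
    intro l hl x
    rw [hcmp, hl _ (hmem x), add_zero]
  have part1 : ∀ l : BV m, (∃ c, ∀ x, cmpnt F l x = c) ∨ IsBalanced (cmpnt F l) := by
    intro l
    by_cases h : ∀ w ∈ W, dot l w = 0
    · exact Or.inl ⟨dot l t, hconst l h⟩
    · exact Or.inr (key l h)
  -- the constant set is the kernel of the pairing with W
  have hCset : {l : BV m | ∃ c, ∀ x, cmpnt F l x = c} = {l : BV m | ∀ w ∈ W, dot l w = 0} := by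
    ext l
    simp only [Set.mem_setOf_eq]
    constructor
    · rintro ⟨c, hc⟩ w hw
      by_contra hne
      have hw1 : dot l w = 1 := (zmod2_cases _).resolve_left hne
      obtain ⟨x₀, hx₀⟩ := hgsurj 0 W.zero_mem
      obtain ⟨x₁, hx₁⟩ := hgsurj w hw
      have h0 : cmpnt F l x₀ = dot l t := by rw [hcmp, hx₀, dot_zero_right, add_zero]
      have h1 : cmpnt F l x₁ = dot l t + 1 := by rw [hcmp, hx₁, hw1]
      rw [hc x₀] at h0; rw [hc x₁] at h1
      rw [← h0] at h1
      exact one_ne_zero (left_eq_add.mp h1)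
    · intro h
      exact ⟨dot l t, hconst l h⟩
  -- the pairing map into the dual of W
  let φ : BV m →ₗ[ZMod 2] Module.Dual (ZMod 2) W :=
    { toFun := fun l =>
        { toFun := fun w => dot l (w : BV m)
          map_add' := fun w w' => by
            simp [dot, mul_add, Finset.sum_add_distrib]
          map_smul' := fun c w => by
            simp [dot, Finset.mul_sum, mul_left_comm] }
      map_add' := fun l l' => by
        apply LinearMap.ext; intro w
        simp [dot, add_mul, Finset.sum_add_distrib]
      map_smul' := fun c l => by
        apply LinearMap.ext; intro w
        simp [dot, Finset.mul_sum, mul_assoc] }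
  have hker : ∀ l, l ∈ LinearMap.ker φ ↔ ∀ w ∈ W, dot l w = 0 := by
    intro l
    simp only [LinearMap.mem_ker]
    constructor
    · intro h w hw
      exact LinearMap.congr_fun h ⟨w, hw⟩
    · intro h
      apply LinearMap.ext
      rintro ⟨w, hw⟩
      exact h w hw
  have hsurj : Function.Surjective φ := by
    intro f
    refine ⟨fun i => Subspace.dualLift W f ((Pi.single i (1 : ZMod 2))), ?_⟩
    apply LinearMap.ext
    rintro ⟨w, hw⟩
    show dot (fun i => Subspace.dualLift W f ((Pi.single i (1 : ZMod 2)))) w = f ⟨w, hw⟩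
    have h1 : ∀ i, Subspace.dualLift W f ((Pi.single i (1 : ZMod 2))) * w i
        = Subspace.dualLift W f (Pi.single i (w i)) := by
      intro i
      have hsingle : Pi.single i (w i) = w i • (Pi.single i (1 : ZMod 2) : BV m) := by
        funext j
        by_cases h : j = i <;> simp [Pi.single_apply, h]
      rw [hsingle, map_smul, smul_eq_mul, mul_comm]
    calc dot (fun i => Subspace.dualLift W f ((Pi.single i (1 : ZMod 2)))) w
        = ∑ i, Subspace.dualLift W f (Pi.single i (w i)) :=
          Finset.sum_congr rfl (fun i _ => h1 i)
      _ = Subspace.dualLift W f (∑ i, Pi.single i (w i)) := (map_sum _ _ _).symm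
      _ = Subspace.dualLift W f w := by rw [Finset.univ_sum_single]
      _ = f ⟨w, hw⟩ := Subspace.dualLift_of_mem hw
  have hWcard : Fintype.card W = 2 ^ n := by
    rw [← Fintype.card_congr e]
    simp [Fintype.card_fun]
  have hfinW : Module.finrank (ZMod 2) W = n := by
    have h := Module.card_eq_pow_finrank (K := ZMod 2) (V := W)
    rw [ZMod.card, hWcard] at h
    exact (Nat.pow_right_injective le_rfl h.symm)
  have hfindual : Module.finrank (ZMod 2) (Module.Dual (ZMod 2) W) = n := by
    rw [Subspace.dual_finrank_eq, hfinW]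
  have hfindom : Module.finrank (ZMod 2) (BV m) = m := Module.finrank_fin_fun (ZMod 2)
  have hrange : LinearMap.range φ = ⊤ := LinearMap.range_eq_top.mpr hsurj
  have hrk := LinearMap.finrank_range_add_finrank_ker φ
  rw [hrange, finrank_top, hfindual, hfindom] at hrk
  have hkerrk : Module.finrank (ZMod 2) (LinearMap.ker φ) = m - n := by omega
  have hkercard : Nat.card (LinearMap.ker φ) = 2 ^ (m - n) := by
    have h := Module.card_eq_pow_finrank (K := ZMod 2) (V := LinearMap.ker φ)
    rw [ZMod.card, hkerrk] at h
    rw [Nat.card_eq_fintype_card, h]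
  have hCcard : {l : BV m | ∃ c, ∀ x, cmpnt F l x = c}.ncard = 2 ^ (m - n) := by
    rw [hCset]
    have hEq : {l : BV m | ∀ w ∈ W, dot l w = 0} = (LinearMap.ker φ : Set (BV m)) := by
      ext l
      simp only [Set.mem_setOf_eq, SetLike.mem_coe]
      exact (hker l).symm
    rw [hEq, ← Nat.card_coe_set_eq]
    exact hkercard
  have hBset : {l : BV m | IsBalanced (cmpnt F l)}
      = {l : BV m | ∃ c, ∀ x, cmpnt F l x = c}ᶜ := by
    ext l
    simp only [Set.mem_setOf_eq, Set.mem_compl_iff]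
    constructor
    · rintro hb ⟨c, hc⟩
      have hfun : cmpnt F l = fun _ => c := funext hc
      rw [hfun] at hb
      exact not_balanced_const hn c hb
    · intro hnc
      rcases part1 l with h | h
      · exact absurd h hnc
      · exact h
  have htotal := Set.ncard_add_ncard_compl {l : BV m | ∃ c, ∀ x, cmpnt F l x = c}
  have hcardBV : Nat.card (BV m) = 2 ^ m := by
    rw [Nat.card_eq_fintype_card]
    simp [Fintype.card_fun]
  rw [hcardBV, hCcard] at htotal
  refine ⟨part1, ?_, hCcard⟩
  rw [hBset]
  omega
end
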